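/- The star K_{1,n} admits local uniform mixing from its center at time t (i.e., every entry of the column of U(t) = exp(itA) indexed by the center has absolute value 1/√(n+1)) if and only if tan(√n·t) = ±√n. -/

import Mathlib

open NormedSpace
open scoped Nat

/-- Adjacency matrix of the star `K_{1,n}`: vertex `0` is the center,
vertices `1,…,n` are the leaves. -/
noncomputable def starAdj (n : ℕ) : Matrix (Fin (n + 1)) (Fin (n + 1)) ℂ :=
  fun i j => if (i = 0 ∧ j ≠ 0) ∨ (i ≠ 0 ∧ j = 0) then 1 else 0

lemma starAdj_sq (n : ℕ) (i j : Fin (n+1)) :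
    (starAdj n * starAdj n) i j
      = if i = 0 then (if j = 0 then (n:ℂ) else 0) else (if j = 0 then 0 else 1) := by
  rw [Matrix.mul_apply, Fin.sum_univ_succ]
  by_cases hi : i = 0 <;> by_cases hj : j = 0 <;>
    simp [starAdj, hi, hj, Fin.succ_ne_zero]

lemma starAdj_cube (n : ℕ) :
    starAdj n * starAdj n * starAdj n = (n : ℂ) • starAdj n := by
  ext i j
  rw [Matrix.mul_apply]
  simp_rw [starAdj_sq]
  rw [Fin.sum_univ_succ]
  by_cases hi : i = 0 <;> by_cases hj : j = 0 <;>
    simp [starAdj, hi, hj, Fin.succ_ne_zero]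

set_option maxHeartbeats 1000000 in
theorem exp_smul_idem' {𝔸 : Type*} [NormedRing 𝔸] [NormedAlgebra ℂ 𝔸] [CompleteSpace 𝔸]
    (c : ℂ) {Q : 𝔸} (hQ : Q * Q = Q) :
    exp (c • Q) = 1 + (Complex.exp c - 1) • Q := by
  have hpow : ∀ k : ℕ, Q ^ (k + 1) = Q := by
    intro k
    induction k with
    | zero => simp
    | succ k ih => rw [pow_succ, ih, hQ]
  have hs : Summable (fun k : ℕ => ((k ! : ℂ))⁻¹ • (c • Q) ^ k) := expSeries_summable' (c • Q)
  have hsc : Summable (fun k : ℕ => ((k ! : ℂ))⁻¹ * c ^ k) := by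
    simpa [smul_eq_mul] using expSeries_summable' (𝕂 := ℂ) c
  have hsc1 : Summable (fun k : ℕ => (((k + 1)! : ℂ))⁻¹ * c ^ (k + 1)) :=
    (summable_nat_add_iff 1).mpr hsc
  have hec : Complex.exp c = 1 + ∑' k : ℕ, (((k + 1)! : ℂ))⁻¹ * c ^ (k + 1) := by
    have := (exp_eq_tsum (𝕂 := ℂ) (𝔸 := ℂ))
    rw [Complex.exp_eq_exp_ℂ, this]
    simp only [smul_eq_mul]
    rw [Summable.tsum_eq_zero_add hsc]
    simp
  rw [exp_eq_tsum ℂ]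
  show ∑' (k : ℕ), ((k ! : ℂ))⁻¹ • (c • Q) ^ k = _
  rw [Summable.tsum_eq_zero_add hs]
  have : ∀ k : ℕ, (((k+1)! : ℂ))⁻¹ • (c • Q) ^ (k+1) = ((((k+1)! : ℂ))⁻¹ * c ^ (k+1)) • Q := by
    intro k
    rw [smul_pow, smul_smul, hpow]
  simp_rw [this]
  rw [Summable.tsum_smul_const hsc1]
  rw [hec]
  simp [add_comm]

theorem Matrix.exp_smul_idem {m : Type*} [Fintype m] [DecidableEq m]
    (c : ℂ) {Q : Matrix m m ℂ} (hQ : Q * Q = Q) :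
    exp (c • Q) = 1 + (Complex.exp c - 1) • Q := by
  letI : SeminormedRing (Matrix m m ℂ) := Matrix.linftyOpSemiNormedRing
  letI : NormedRing (Matrix m m ℂ) := Matrix.linftyOpNormedRing
  letI : NormedAlgebra ℂ (Matrix m m ℂ) := Matrix.linftyOpNormedAlgebra
  exact exp_smul_idem' c hQ

set_option maxHeartbeats 1000000 in
lemma exp_star (n : ℕ) (hn : 1 ≤ n) (t : ℝ) (i : Fin (n + 1)) :
    exp ((Complex.I * (t : ℂ)) • starAdj n) i 0 =
      if i = 0 then (Complex.cos ((Real.sqrt n : ℂ) * t))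
      else Complex.I * Complex.sin ((Real.sqrt n : ℂ) * t) / (Real.sqrt n : ℂ) := by
  set A := starAdj n with hA
  set c : ℂ := ((Real.sqrt (n:ℝ) : ℝ) : ℂ) with hcdef
  have hc2 : c ^ 2 = (n : ℂ) := by
    rw [hcdef]
    norm_cast
    rw [Real.sq_sqrt (by positivity)]
  have hnpos : (0:ℝ) < (n:ℝ) := by exact_mod_cast hn
  have hc0 : c ≠ 0 := by
    rw [hcdef]
    simp only [ne_eq, Complex.ofReal_eq_zero]
    exact ne_of_gt (Real.sqrt_pos.mpr hnpos)
  have hA3 : A * A * A = (n : ℂ) • A := starAdj_cube n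
  set P : Matrix (Fin (n+1)) (Fin (n+1)) ℂ := (n : ℂ)⁻¹ • (A * A) with hPdef
  have hn0 : (n : ℂ) ≠ 0 := by
    rw [← hc2]; exact pow_ne_zero 2 hc0
  have hAA' : A * A = (c ^ 2) • P := by
    rw [hPdef, smul_smul, hc2, mul_inv_cancel₀ hn0, one_smul]
  have hPP : P * P = P := by
    rw [hPdef, smul_mul_assoc, mul_smul_comm, ← mul_assoc, hA3, smul_mul_assoc]
    rw [smul_smul, smul_smul]
    congr 1
    field_simp
  have hPA : P * A = A := by
    rw [hPdef, smul_mul_assoc, hA3, smul_smul, inv_mul_cancel₀ hn0, one_smul]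
  have hAP : A * P = A := by
    rw [hPdef, mul_smul_comm, ← mul_assoc, hA3, smul_smul, inv_mul_cancel₀ hn0, one_smul]
  have hP0 : ∀ j : Fin (n+1), P j 0 = if j = 0 then 1 else 0 := by
    intro j
    rw [hPdef, Matrix.smul_apply, starAdj_sq]
    by_cases hj : j = 0 <;> simp [hj, inv_mul_cancel₀ hn0]
  have hA0 : ∀ j : Fin (n+1), A j 0 = if j = 0 then 0 else 1 := by
    intro j
    by_cases hj : j = 0 <;> simp [hA, starAdj, hj]
  clear_value A c P
  clear hA hPdef hA3 hn0 hnpos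
  have key : ∀ a b a' b' : ℂ, (a • P + b • A) * (a' • P + b' • A)
      = (a * a' + b * b' * c ^ 2) • P + (a * b' + b * a') • A := by
    intro a b a' b'
    simp only [mul_add, add_mul, smul_mul_assoc, mul_smul_comm, hPP, hPA, hAP, hAA']
    module
  set Qp : Matrix (Fin (n+1)) (Fin (n+1)) ℂ := (2:ℂ)⁻¹ • P + (2⁻¹ * c⁻¹) • A with hQpdef
  set Qm : Matrix (Fin (n+1)) (Fin (n+1)) ℂ := (2:ℂ)⁻¹ • P + (-(2⁻¹ * c⁻¹)) • A with hQmdef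
  have hQpQp : Qp * Qp = Qp := by
    rw [hQpdef, key]
    match_scalars <;> field_simp <;> ring
  have hQmQm : Qm * Qm = Qm := by
    rw [hQmdef, key]
    match_scalars <;> field_simp <;> ring
  have hQpQm : Qp * Qm = 0 := by
    rw [hQpdef, hQmdef, key]
    match_scalars <;> field_simp <;> ring
  have hQmQp : Qm * Qp = 0 := by
    rw [hQmdef, hQpdef, key]
    match_scalars <;> field_simp <;> ring
  have hQp0 : ∀ j : Fin (n+1), Qp j 0 = if j = 0 then 2⁻¹ else 2⁻¹ * c⁻¹ := by
    intro j
    rw [hQpdef, Matrix.add_apply, Matrix.smul_apply, Matrix.smul_apply, hP0, hA0]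
    by_cases hj : j = 0 <;> simp [hj]
  have hQm0 : ∀ j : Fin (n+1), Qm j 0 = if j = 0 then 2⁻¹ else -(2⁻¹ * c⁻¹) := by
    intro j
    rw [hQmdef, Matrix.add_apply, Matrix.smul_apply, Matrix.smul_apply, hP0, hA0]
    by_cases hj : j = 0 <;> simp [hj]
  have hQd : Qp - Qm = c⁻¹ • A := by
    rw [hQpdef, hQmdef]; module
  clear_value Qp Qm
  clear hQpdef hQmdef hP0 key hPP hPA hAP hAA'
  set z : ℂ := Complex.I * t * c with hzdef
  have hdecomp : (Complex.I * (t : ℂ)) • A = z • Qp + (-z) • Qm := by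
    have h1 : z • Qp + (-z) • Qm = z • (Qp - Qm) := by module
    rw [h1, hQd, smul_smul, hzdef, mul_assoc, mul_inv_cancel₀ hc0, mul_one]
  have hcomm : Commute (z • Qp) ((-z) • Qm) := by
    unfold Commute SemiconjBy
    rw [smul_mul_assoc, mul_smul_comm, smul_mul_assoc, mul_smul_comm, hQpQm, hQmQp]
    simp only [smul_zero]
  rw [hdecomp, Matrix.exp_add_of_commute _ _ hcomm,
    Matrix.exp_smul_idem z hQpQp, Matrix.exp_smul_idem (-z) hQmQm]
  set a : ℂ := Complex.exp z - 1 with hadef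
  set b : ℂ := Complex.exp (-z) - 1 with hbdef
  have hexpand : (1 + a • Qp) * (1 + b • Qm) = 1 + a • Qp + b • Qm := by
    rw [mul_add, add_mul, add_mul, mul_one, one_mul, mul_one, smul_mul_assoc,
      mul_smul_comm, hQpQm]
    simp only [smul_zero, add_zero, add_assoc]
  rw [hexpand]
  rw [Matrix.add_apply, Matrix.add_apply, Matrix.smul_apply, Matrix.smul_apply,
    Matrix.one_apply, hQp0, hQm0]
  have hz1 : (c * (t:ℂ)) * Complex.I = z := by rw [hzdef]; ring
  have hz2 : (-(c * (t:ℂ))) * Complex.I = -z := by rw [neg_mul, hz1]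
  by_cases hi : i = 0
  · simp only [hi, if_pos rfl, if_true, smul_eq_mul]
    rw [Complex.cos, hz1, hz2, hadef, hbdef]
    ring
  · simp only [if_neg hi, smul_eq_mul]
    rw [Complex.sin, hz1, hz2, hadef, hbdef]
    field_simp
    ring_nf
    rw [Complex.I_sq]
    ring

theorem star_local_uniform_mixing_iff (n : ℕ) (hn : 1 ≤ n) (t : ℝ) :
    (∀ i : Fin (n + 1),
        ‖NormedSpace.exp ((Complex.I * (t : ℂ)) • starAdj n) i 0‖
          = 1 / Real.sqrt (n + 1))
      ↔ (Real.tan (Real.sqrt n * t) = Real.sqrt n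
          ∨ Real.tan (Real.sqrt n * t) = -Real.sqrt n) := by
  have hnpos : (0:ℝ) < (n:ℝ) := by exact_mod_cast hn
  have hsn : 0 < Real.sqrt n := Real.sqrt_pos.mpr hnpos
  have hsn1 : 0 < Real.sqrt ((n:ℝ) + 1) := Real.sqrt_pos.mpr (by positivity)
  set θ : ℝ := Real.sqrt n * t with hθ
  have hcast : ((Real.sqrt (n:ℝ) : ℝ) : ℂ) * (t : ℂ) = ((θ : ℝ) : ℂ) := by
    rw [hθ]; push_cast; ring
  have habs0 : ‖Complex.cos (((Real.sqrt (n:ℝ) : ℝ) : ℂ) * t)‖ = |Real.cos θ| := by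
    rw [hcast, ← Complex.ofReal_cos, Complex.norm_real, Real.norm_eq_abs]
  have habs1 : ‖Complex.I * Complex.sin (((Real.sqrt (n:ℝ) : ℝ) : ℂ) * t)
      / ((Real.sqrt (n:ℝ) : ℝ) : ℂ)‖ = |Real.sin θ| / Real.sqrt n := by
    rw [hcast, ← Complex.ofReal_sin, norm_div, norm_mul, Complex.norm_I, one_mul,
      Complex.norm_real, Real.norm_eq_abs, Complex.norm_real, Real.norm_eq_abs, abs_of_nonneg (Real.sqrt_nonneg _)]
  have hone : ((⟨1, by omega⟩ : Fin (n+1)) : Fin (n+1)) ≠ 0 := by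
    simp [Fin.ext_iff]
  constructor
  · intro h
    have h0 := h 0
    have h1 := h ⟨1, by omega⟩
    rw [exp_star n hn t 0, if_pos rfl, habs0] at h0
    rw [exp_star n hn t ⟨1, by omega⟩, if_neg hone, habs1] at h1
    -- real trig part
    have hcos : Real.cos θ ≠ 0 := by
      intro hc
      rw [hc, abs_zero] at h0
      exact absurd h0.symm (by positivity)
    have hsin : |Real.sin θ| = Real.sqrt n / Real.sqrt ((n:ℝ)+1) := by
      field_simp at h1
      rw [eq_div_iff (ne_of_gt hsn1)]
      exact h1
    have htan : |Real.tan θ| = Real.sqrt n := by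
      rw [Real.tan_eq_sin_div_cos, abs_div, hsin, h0]
      field_simp
    rcases abs_eq (le_of_lt hsn) |>.mp htan with h' | h'
    · exact Or.inl h'
    · exact Or.inr h'
  · intro h i
    -- derive cos² = 1/(n+1)
    have hcos : Real.cos θ ≠ 0 := by
      intro hc
      have : Real.tan θ = 0 := by
        rw [Real.tan_eq_sin_div_cos, hc, div_zero]
      rcases h with h' | h' <;> rw [this] at h' <;>
        [exact absurd h'.symm (ne_of_gt hsn); exact absurd h' (by intro hh; nlinarith)]
    have hsc : Real.sin θ = Real.tan θ * Real.cos θ := by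
      rw [Real.tan_eq_sin_div_cos, div_mul_cancel₀ _ hcos]
    have htan2 : Real.tan θ ^ 2 = n := by
      rcases h with h' | h' <;> rw [h'] <;>
        simp [Real.sq_sqrt (le_of_lt hnpos)]
    have hsin2 : Real.sin θ ^ 2 = (n:ℝ) * Real.cos θ ^ 2 := by
      rw [hsc, mul_pow, htan2]
    have hpyth := Real.sin_sq_add_cos_sq θ
    have h' : ((n:ℝ) + 1) * Real.cos θ ^ 2 = 1 := by
      linear_combination hpyth - hsin2
    have hcos2 : Real.cos θ ^ 2 = 1 / ((n:ℝ) + 1) := by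
      rw [eq_div_iff (by positivity)]
      linear_combination h'
    have habscos : |Real.cos θ| = 1 / Real.sqrt ((n:ℝ)+1) := by
      rw [← Real.sqrt_sq_eq_abs, hcos2, one_div, Real.sqrt_inv, one_div]
    have habssin : |Real.sin θ| / Real.sqrt n = 1 / Real.sqrt ((n:ℝ)+1) := by
      rw [← Real.sqrt_sq_eq_abs, hsin2, hcos2, Real.sqrt_mul (le_of_lt hnpos),
        one_div, Real.sqrt_inv]
      field_simp
    rw [exp_star n hn t i]
    by_cases hi : i = 0
    · rw [if_pos hi, habs0, habscos]
    · rw [if_neg hi, habs1, habssin]
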